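/- Every exponentially separable space is functionally countable. -/
import Mathlib


/-- A space is exponentially separable. -/
def ExpSep (X : Type*) [TopologicalSpace X] : Prop :=
  ∀ F : Set (Set X), F.Countable → (∀ C ∈ F, IsClosed C) →
    ∃ A : Set X, A.Countable ∧ ∀ G ⊆ F, (⋂₀ G).Nonempty → (A ∩ ⋂₀ G).Nonempty

/-- A space is functionally countable. -/
def FunCtble (X : Type*) [TopologicalSpace X] : Prop :=
  ∀ f : X → ℝ, Continuous f → (Set.range f).Countable

theorem stmt18 (X : Type*) [TopologicalSpace X] (h : ExpSep X) : FunCtble X := by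
  intro f hf
  set F : Set (Set X) := Set.range (fun q : ℚ × ℚ => f ⁻¹' Set.Icc (q.1 : ℝ) (q.2 : ℝ)) with hF
  obtain ⟨A, hAc, hA⟩ := h F (Set.countable_range _) (by
    rintro C ⟨q, rfl⟩
    exact isClosed_Icc.preimage hf)
  have key : Set.range f ⊆ f '' A := by
    rintro r ⟨x, rfl⟩
    set r := f x with hr
    set G : Set (Set X) :=
      {S | ∃ q : ℚ × ℚ, (q.1 : ℝ) ≤ r ∧ r ≤ (q.2 : ℝ) ∧ S = f ⁻¹' Set.Icc (q.1 : ℝ) (q.2 : ℝ)}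
      with hG
    have hGF : G ⊆ F := by
      rintro S ⟨q, _, _, rfl⟩
      exact ⟨q, rfl⟩
    have hxG : x ∈ ⋂₀ G := by
      rintro S ⟨q, h1, h2, rfl⟩
      exact ⟨h1, h2⟩
    obtain ⟨a, haA, haG⟩ := hA G hGF ⟨x, hxG⟩
    have hmem : ∀ q1 q2 : ℚ, (q1 : ℝ) ≤ r → r ≤ (q2 : ℝ) → f a ∈ Set.Icc (q1 : ℝ) (q2 : ℝ) := by
      intro q1 q2 h1 h2
      exact haG _ ⟨(q1, q2), h1, h2, rfl⟩
    have hle : f a ≤ r := by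
      by_contra hlt
      push_neg at hlt
      obtain ⟨q2, hq2, hq2'⟩ := exists_rat_btwn hlt
      obtain ⟨q1, hq1⟩ := exists_rat_lt r
      exact absurd (hmem q1 q2 hq1.le hq2.le).2 (not_le.2 hq2')
    have hge : r ≤ f a := by
      by_contra hlt
      push_neg at hlt
      obtain ⟨q1, hq1, hq1'⟩ := exists_rat_btwn hlt
      obtain ⟨q2, hq2⟩ := exists_rat_gt r
      exact absurd (hmem q1 q2 hq1'.le hq2.le).1 (not_le.2 hq1)
    exact ⟨a, haA, le_antisymm hle hge⟩
  exact Set.Countable.mono key (hAc.image f)
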